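/- The superpermutation on n symbols of length ∑_{i=1}^{n} i! produced by the recursive construction is a palindrome, for every n ≥ 1. -/

import Mathlib

/-- A superpermutation on `n` symbols, encoded over `ℕ` (symbol `i+1` of the
paper corresponds to `i : ℕ`, `i < n`): the word contains every permutation
`σ` of `Fin n` (as the word `σ 0, σ 1, …, σ (n-1)`) as a contiguous substring. -/
def IsSuperpermNat (n : ℕ) (w : List ℕ) : Prop :=
  ∀ σ : Equiv.Perm (Fin n), List.ofFn (fun i => (σ i : ℕ)) <:+: w

/-- Remove duplicates from a list, keeping the *first* occurrence of each element. -/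
def dedupFirst : List (List ℕ) → List (List ℕ)
  | [] => []
  | x :: xs => x :: (dedupFirst xs).filter (fun y => decide (y ≠ x))

/-- The permutations of the symbols `0, …, m-1`, listed in order of their first
appearance as a contiguous substring of the word `w`. -/
def firstAppear (m : ℕ) (w : List ℕ) : List (List ℕ) :=
  dedupFirst (((List.range w.length).map (fun i => (w.drop i).take m)).filter
    (fun s => decide (s.Perm (List.range m))))

/-- The maximal overlap: the greatest `k` such that the prefix of `b` of length
`k` is a suffix of `a`. -/
def overlap (a b : List ℕ) : ℕ :=
  Nat.findGreatest (fun k => b.take k <:+ a) (min a.length b.length)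

/-- Concatenate a chain of words, eliminating the maximal overlap between
adjacent words. -/
def glueChain : List (List ℕ) → List ℕ
  | [] => []
  | [p] => p
  | p :: q :: rest => p ++ (glueChain (q :: rest)).drop (overlap p q)

/-- One step of the recursive construction: given a superpermutation `w` on the
symbols `0, …, m-1`, order the permutations of `m` symbols by first appearance
in `w`; replace each such permutation `s` by the `m + 1` leftward cyclic shifts
of the word `s · m` (from `s · m` to `m · s`); and concatenate all of these,
eliminating overlap between adjacent permutations. -/
def buildStep (m : ℕ) (w : List ℕ) : List ℕ :=
  glueChain (((firstAppear m w).map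
    (fun s => (List.range (m + 1)).map (fun j => (s ++ [m]).rotate j))).flatten)

/-- The recursive construction of superpermutations: start with the single-symbol
word at `n = 1` and iterate `buildStep`. -/
def superword : ℕ → List ℕ
  | 0 => []
  | 1 => [0]
  | n + 2 => buildStep (n + 1) (superword (n + 1))
namespace SP
open List

/-! ### overlap basics -/

lemma overlap_le_left (a b : List ℕ) : overlap a b ≤ a.length :=
  le_trans (Nat.findGreatest_le _) (min_le_left _ _)

lemma overlap_le_right (a b : List ℕ) : overlap a b ≤ b.length :=
  le_trans (Nat.findGreatest_le _) (min_le_right _ _)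

lemma take_overlap_suffix (a b : List ℕ) : b.take (overlap a b) <:+ a := by
  unfold overlap
  exact Nat.findGreatest_spec (P := fun k => b.take k <:+ a) (Nat.zero_le _)
    (by show List.take 0 b <:+ a; rw [List.take_zero]; exact List.nil_suffix)

lemma not_take_suffix_of_overlap_lt {a b : List ℕ} {k : ℕ} (h1 : overlap a b < k)
    (h2 : k ≤ a.length) (h3 : k ≤ b.length) : ¬ b.take k <:+ a := fun h =>
  absurd (Nat.le_findGreatest (le_min h2 h3) h) (not_le.mpr h1)

lemma suffix_eq_drop {x a : List ℕ} (h : x <:+ a) : x = a.drop (a.length - x.length) := by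
  obtain ⟨u, rfl⟩ := h
  rw [length_append, Nat.add_sub_cancel, drop_left]

lemma overlap_lt_of_ne {a b : List ℕ} (hab : a ≠ b) (hla : a.length = b.length) :
    overlap a b < b.length := by
  rcases lt_or_eq_of_le (overlap_le_right a b) with h | h
  · exact h
  · exfalso
    have hs := take_overlap_suffix a b
    rw [h, take_length] at hs
    exact hab (hs.eq_of_length hla.symm).symm

/-! ### glueChain basics -/

lemma glue_cons (a b : List ℕ) (r : List (List ℕ)) :
    glueChain (a :: b :: r) = a ++ (glueChain (b :: r)).drop (overlap a b) := rfl

lemma prefix_glue (b : List ℕ) (r : List (List ℕ)) : b <+: glueChain (b :: r) := by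
  cases r with
  | nil => simp [glueChain]
  | cons q r => exact ⟨_, rfl⟩

lemma length_le_glue (b : List ℕ) (r : List (List ℕ)) :
    b.length ≤ (glueChain (b :: r)).length := (prefix_glue b r).length_le

lemma take_drop_decomp' {a b : List ℕ} {o : ℕ} (hs : b.take o <:+ a) (hol : o ≤ b.length) :
    a.take (a.length - o) ++ b.take o = a := by
  obtain ⟨u, hu⟩ := hs
  have hlen : a.length = u.length + o := by
    rw [← hu]; simp [min_eq_left hol]
  have h1 : a.take (a.length - o) = u := by
    rw [hlen, Nat.add_sub_cancel, ← hu, take_left]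
  rw [h1, hu]

lemma take_drop_decomp (a b : List ℕ) :
    a.take (a.length - overlap a b) ++ b.take (overlap a b) = a :=
  take_drop_decomp' (take_overlap_suffix a b) (overlap_le_right a b)

lemma gap_region_eq (a b : List ℕ) :
    a ++ b.drop (overlap a b) = a.take (a.length - overlap a b) ++ b := by
  set o := overlap a b with ho
  have hd := take_drop_decomp' (a := a) (b := b) (o := o)
    (ho ▸ take_overlap_suffix a b) (ho ▸ overlap_le_right a b)
  conv_lhs => rw [← hd]
  rw [append_assoc, take_append_drop]

lemma glue_eq_take_append (a b : List ℕ) (r : List (List ℕ)) :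
    glueChain (a :: b :: r) = a.take (a.length - overlap a b) ++ glueChain (b :: r) := by
  rw [glue_cons]
  set o := overlap a b with ho
  have ht : (glueChain (b :: r)).take o = b.take o := by
    obtain ⟨X, hX⟩ := prefix_glue b r
    rw [← hX, take_append_of_le_length (ho ▸ overlap_le_right a b)]
  have hd := take_drop_decomp' (a := a) (b := b) (o := o)
    (ho ▸ take_overlap_suffix a b) (ho ▸ overlap_le_right a b)
  conv_lhs => rw [← hd]
  rw [append_assoc, ← ht, take_append_drop]

lemma glue_drop (a b : List ℕ) (r : List (List ℕ)) :
    (glueChain (a :: b :: r)).drop (a.length - overlap a b) = glueChain (b :: r) := by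
  rw [glue_eq_take_append]
  exact drop_left' (by simp [length_take])

lemma infix_glue {c : List ℕ} : ∀ {C : List (List ℕ)}, c ∈ C → c <:+: glueChain C := by
  intro C
  induction C with
  | nil => intro h; simp at h
  | cons a r ih =>
    intro h
    rcases mem_cons.mp h with rfl | h
    · exact (prefix_glue c r).isInfix
    · have hr : r ≠ [] := ne_nil_of_mem h
      obtain ⟨b, r', rfl⟩ := exists_cons_of_ne_nil hr
      refine (ih h).trans ?_
      exact ⟨a.take (a.length - overlap a b), [], by simpa using (glue_eq_take_append a b r').symm⟩

/-! ### ovSum and length -/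

def ovSum : List (List ℕ) → ℕ
  | [] => 0
  | [_] => 0
  | a :: b :: r => overlap a b + ovSum (b :: r)

lemma glue_length : ∀ C : List (List ℕ), (glueChain C).length + ovSum C = (C.map List.length).sum := by
  intro C
  induction C with
  | nil => simp [glueChain, ovSum]
  | cons a r ih =>
    cases r with
    | nil => simp [glueChain, ovSum]
    | cons b r =>
      rw [glue_cons]
      have h1 : overlap a b ≤ (glueChain (b :: r)).length :=
        le_trans (overlap_le_right a b) (length_le_glue b r)
      simp only [ovSum, map_cons, sum_cons, length_append, length_drop] at *
      omega

lemma ovSum_cons (a b : List ℕ) (r : List (List ℕ)) :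
    ovSum (a :: b :: r) = overlap a b + ovSum (b :: r) := rfl

lemma ovSum_append : ∀ (B M : List (List ℕ)) (hB : B ≠ []) (hM : M ≠ []),
    ovSum (B ++ M) = ovSum B + overlap (B.getLast hB) (M.head hM) + ovSum M := by
  intro B
  induction B with
  | nil => intro M h; simp at h
  | cons a B ih =>
    intro M hB hM
    cases B with
    | nil =>
      obtain ⟨h, M', rfl⟩ := exists_cons_of_ne_nil hM
      simp [ovSum, ovSum_cons]
    | cons b B' =>
      have hne : b :: B' ≠ [] := by simp
      rw [cons_append, cons_append, ovSum_cons,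
        show (b :: (B' ++ M)) = ((b :: B') ++ M) from rfl, ih M hne hM, ovSum_cons,
        getLast_cons hne]
      ring

lemma glue_concat : ∀ (D : List (List ℕ)) (x : List ℕ) (h : D ≠ []),
    glueChain (D ++ [x]) = glueChain D ++ x.drop (overlap (D.getLast h) x) := by
  intro D
  induction D with
  | nil => intro x h; simp at h
  | cons p D ih =>
    intro x hp
    cases D with
    | nil => simp [glueChain]
    | cons q r =>
      have hne : q :: r ≠ [] := by simp
      rw [cons_append, show ((q :: r) ++ [x] : List (List ℕ)) = q :: (r ++ [x]) from rfl]
      rw [glue_cons]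
      rw [show (q :: (r ++ [x]) : List (List ℕ)) = (q :: r) ++ [x] from rfl]
      rw [ih x hne]
      have h1 : overlap p q ≤ (glueChain (q :: r)).length :=
        le_trans (overlap_le_right p q) (length_le_glue q r)
      rw [drop_append_of_le_length h1, glue_cons, getLast_cons hne, append_assoc]

end SP
namespace SP
open List

/-! ### reversal -/

lemma findGreatest_congr {P Q : ℕ → Prop} [DecidablePred P] [DecidablePred Q] :
    ∀ n, (∀ k, k ≤ n → (P k ↔ Q k)) → Nat.findGreatest P n = Nat.findGreatest Q n := by
  intro n
  induction n with
  | zero => intro; rfl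
  | succ n ih =>
    intro h
    rw [Nat.findGreatest_succ, Nat.findGreatest_succ, ih (fun k hk => h k (Nat.le_succ_of_le hk))]
    by_cases hp : P (n + 1)
    · rw [if_pos hp, if_pos ((h (n+1) le_rfl).mp hp)]
    · rw [if_neg hp, if_neg (fun hq => hp ((h (n+1) le_rfl).mpr hq))]

lemma take_suffix_iff {a b : List ℕ} {k : ℕ} (hka : k ≤ a.length) (hkb : k ≤ b.length) :
    b.take k <:+ a ↔ a.drop (a.length - k) = b.take k := by
  constructor
  · intro h
    have := suffix_eq_drop h
    rw [length_take, min_eq_left hkb] at this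
    exact this.symm
  · intro h; rw [← h]; exact drop_suffix _ _

lemma overlap_reverse (a b : List ℕ) : overlap b.reverse a.reverse = overlap a b := by
  unfold overlap
  rw [length_reverse, length_reverse, min_comm]
  apply findGreatest_congr
  intro k hk
  have hka : k ≤ a.length := le_trans hk (min_le_left _ _)
  have hkb : k ≤ b.length := le_trans hk (min_le_right _ _)
  rw [take_suffix_iff (by simpa using hkb) (by simpa using hka),
    take_suffix_iff hka hkb]
  have h1 : a.reverse.take k = (a.drop (a.length - k)).reverse := by
    rw [reverse_drop]
    congr 1
    omega
  have h2 : b.reverse.drop (b.reverse.length - k) = (b.take k).reverse := by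
    rw [reverse_take, length_reverse]
  rw [h1, h2]
  constructor
  · intro h; exact (reverse_injective h).symm
  · intro h; rw [h]

lemma glue_reverse : ∀ C : List (List ℕ),
    (glueChain C).reverse = glueChain ((C.map List.reverse).reverse) := by
  intro C
  induction C with
  | nil => simp [glueChain]
  | cons a r ih =>
    cases r with
    | nil => simp [glueChain]
    | cons b r =>
      rw [glue_eq_take_append, reverse_append, ih]
      have hT : (((b :: r).map List.reverse).reverse : List (List ℕ)) ≠ [] := by simp
      rw [show (((a :: b :: r).map List.reverse).reverse : List (List ℕ))
          = ((b :: r).map List.reverse).reverse ++ [a.reverse] by simp]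
      rw [glue_concat _ _ hT]
      congr 1
      · have hg : (((b :: r).map List.reverse).reverse).getLast hT = b.reverse := by
          rw [getLast_reverse]
          simp
      -- continue
        rw [hg, overlap_reverse, reverse_take]
        congr 1
        have := overlap_le_left a b
        omega

end SP
namespace SP
open List

/-! ### windows and first appearance -/

def GapOk (L : ℕ) (a b : List ℕ) : Prop :=
  ∀ t, 0 < t → t < a.length - overlap a b →
    ¬ (((a ++ b.drop (overlap a b)).drop t).take L).Perm (List.range L)

def Rel (L : ℕ) (a b : List ℕ) : Prop :=
  1 ≤ overlap a b ∧ overlap a b < L ∧ GapOk L a b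

def winF (m : ℕ) (w : List ℕ) : List (List ℕ) :=
  ((List.range w.length).map (fun i => (w.drop i).take m)).filter
    (fun s => decide (s.Perm (List.range m)))

lemma firstAppear_eq (m : ℕ) (w : List ℕ) : firstAppear m w = dedupFirst (winF m w) := rfl

lemma filter_map_range_single {f : ℕ → List ℕ} {p : List ℕ → Bool} {d : ℕ} (hd : 0 < d)
    (h0 : p (f 0) = true) (h1 : ∀ i, 0 < i → i < d → p (f i) = false) :
    ((List.range d).map f).filter p = [f 0] := by
  obtain ⟨d', rfl⟩ : ∃ d', d = d' + 1 := ⟨d - 1, by omega⟩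
  rw [range_succ_eq_map, map_cons, filter_cons, h0, if_pos rfl, map_map]
  congr 1
  rw [filter_eq_nil_iff]
  intro x hx
  simp only [mem_map, mem_range, Function.comp] at hx
  obtain ⟨i, hi, rfl⟩ := hx
  simp [h1 (i+1) (by omega) (by omega)]

lemma winF_glue (L : ℕ) (hL : 1 ≤ L) :
    ∀ C : List (List ℕ), C ≠ [] → (∀ s ∈ C, s.Perm (List.range L)) →
    C.Chain' (Rel L) → winF L (glueChain C) = C := by
  intro C
  induction C with
  | nil => intro h; exact absurd rfl h
  | cons a r ih =>
    intro _ hperm hchain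
    have ha : a.length = L := by
      simpa using (hperm a mem_cons_self).length_eq
    cases r with
    | nil =>
      have hg : glueChain [a] = a := rfl
      unfold winF
      rw [hg, ha]
      rw [filter_map_range_single hL]
      · rw [drop_zero, take_of_length_le (le_of_eq ha)]
      · rw [drop_zero, take_of_length_le (le_of_eq ha)]
        exact decide_eq_true (hperm a mem_cons_self)
      · intro i h0 hiL
        apply decide_eq_false
        intro hp
        have hl := hp.length_eq
        simp only [length_take, length_drop, length_range, ha] at hl
        omega
    | cons b r =>
      obtain ⟨hrel, hchain'⟩ := isChain_cons_cons.mp hchain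
      obtain ⟨ho1, hoL, hgap⟩ := hrel
      have hb : b.length = L := by
        simpa using (hperm b (mem_cons_of_mem a mem_cons_self)).length_eq
      set o := overlap a b with hoo
      set d := L - o with hdd
      have hd1 : 1 ≤ d := by omega
      have hIH : winF L (glueChain (b :: r)) = b :: r :=
        ih (by simp) (fun s hs => hperm s (mem_cons_of_mem a hs)) hchain'
      have hwd : glueChain (a :: b :: r) = a.take d ++ glueChain (b :: r) := by
        rw [glue_eq_take_append, ha]
      have hlen : (glueChain (a :: b :: r)).length = d + (glueChain (b :: r)).length := by
        rw [hwd, length_append, length_take, min_eq_left (by omega : d ≤ a.length)]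
      unfold winF
      rw [hlen, range_add, map_append, filter_append]
      have hfirst : ((List.range d).map
          (fun i => ((glueChain (a :: b :: r)).drop i).take L)).filter
            (fun s => decide (s.Perm (List.range L))) = [a] := by
        have hwin0 : ((glueChain (a :: b :: r)).drop 0).take L = a := by
          rw [drop_zero, glue_cons, ← ha, take_left]
        rw [filter_map_range_single hd1]
        · rw [hwin0]
        · rw [hwin0]
          exact decide_eq_true (hperm a mem_cons_self)
        · intro i hi0 hid
          obtain ⟨X, hX⟩ := prefix_glue b r
          have hw' : glueChain (a :: b :: r) = (a ++ b.drop o) ++ X := by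
            rw [glue_cons, ← hX, drop_append_of_le_length (overlap_le_right a b), append_assoc]
          have hY : (a ++ b.drop o).length = 2 * L - o := by
            simp [length_append, length_drop, ha, hb]; omega
          have hwin : ((glueChain (a :: b :: r)).drop i).take L
              = ((a ++ b.drop o).drop i).take L := by
            rw [hw', drop_append_of_le_length (by omega), take_append_of_le_length
              (by simp only [length_drop]; omega)]
          rw [hwin]
          exact decide_eq_false (hgap i hi0 (by omega))
      rw [hfirst]
      have hsecond : (((List.range (glueChain (b :: r)).length).map (fun x => d + x)).map
          (fun i => ((glueChain (a :: b :: r)).drop i).take L)).filter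
            (fun s => decide (s.Perm (List.range L))) = b :: r := by
        rw [map_map]
        have hstep : ∀ i, ((glueChain (a :: b :: r)).drop (d + i)).take L
            = ((glueChain (b :: r)).drop i).take L := by
          intro i
          have : (glueChain (a :: b :: r)).drop (d + i)
              = ((glueChain (a :: b :: r)).drop d).drop i := by
            rw [drop_drop, Nat.add_comm]
          rw [this]
          congr 2
          have := glue_drop a b r
          rw [ha] at this
          exact this
        rw [show ((List.range (glueChain (b :: r)).length).map
            ((fun i => ((glueChain (a :: b :: r)).drop i).take L) ∘ (fun x => d + x)))
            = ((List.range (glueChain (b :: r)).length).map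
              (fun i => ((glueChain (b :: r)).drop i).take L)) from
          map_congr_left (fun i _ => hstep i)]
        exact hIH
      rw [hsecond, singleton_append]

lemma dedupFirst_eq_self : ∀ {S : List (List ℕ)}, S.Nodup → dedupFirst S = S := by
  intro S
  induction S with
  | nil => intro; rfl
  | cons x xs ih =>
    intro h
    rw [dedupFirst, ih (nodup_cons.mp h).2]
    congr 1
    apply filter_eq_self.mpr
    intro y hy
    exact decide_eq_true (fun hxy => (nodup_cons.mp h).1 (hxy ▸ hy))

lemma firstAppear_glue {L : ℕ} {C : List (List ℕ)} (hL : 1 ≤ L) (hne : C ≠ [])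
    (hperm : ∀ s ∈ C, s.Perm (List.range L)) (hchain : C.Chain' (Rel L))
    (hnodup : C.Nodup) : firstAppear L (glueChain C) = C := by
  rw [firstAppear_eq, winF_glue L hL C hne hperm hchain, dedupFirst_eq_self hnodup]

/-! ### reversal of GapOk -/

lemma window_reverse {l : List ℕ} {t k : ℕ} (h : t + k ≤ l.length) :
    (l.reverse.drop t).take k = ((l.drop (l.length - t - k)).take k).reverse := by
  have h1 : l.reverse.drop t = (l.take (l.length - t)).reverse := by
    rw [reverse_take]
    congr 1
    omega
  rw [h1]
  have h2 : ((l.take (l.length - t)).reverse).take k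
      = ((l.take (l.length - t)).drop ((l.length - t) - k)).reverse := by
    rw [reverse_drop]
    congr 1
    simp only [length_take]
    omega
  rw [h2, drop_take]
  rw [show l.length - t - (l.length - t - k) = k from by omega]

lemma GapOk_reverse {L : ℕ} {a b : List ℕ} (ha : a.length = L) (hb : b.length = L)
    (hgap : GapOk L a b) : GapOk L b.reverse a.reverse := by
  intro t ht1 ht2
  rw [length_reverse, overlap_reverse] at ht2
  have hreg : b.reverse ++ a.reverse.drop (overlap b.reverse a.reverse)
      = (a ++ b.drop (overlap a b)).reverse := by
    rw [overlap_reverse, gap_region_eq a b, reverse_append, reverse_take]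
    congr 2
    have := overlap_le_left a b
    omega
  rw [hreg]
  have hZ : (a ++ b.drop (overlap a b)).length = 2 * L - overlap a b := by
    have := overlap_le_right a b
    simp only [length_append, length_drop, ha, hb]
    omega
  rw [window_reverse (by omega)]
  intro hp
  have hp' := ((reverse_perm _).symm.trans hp)
  exact hgap ((a ++ b.drop (overlap a b)).length - t - L) (by omega) (by omega) hp'

lemma Rel_reverse {L : ℕ} {a b : List ℕ} (ha : a.length = L) (hb : b.length = L)
    (h : Rel L a b) : Rel L b.reverse a.reverse := by
  obtain ⟨h1, h2, h3⟩ := h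
  exact ⟨by rwa [overlap_reverse], by rwa [overlap_reverse], GapOk_reverse ha hb h3⟩

lemma chain'_mem {α : Type*} {R : α → α → Prop} : ∀ {l : List α}, l.Chain' R →
    l.Chain' (fun a b => R a b ∧ a ∈ l ∧ b ∈ l) := by
  intro l
  induction l with
  | nil => intro _; exact IsChain.nil
  | cons x xs ih =>
    intro h
    rcases xs with _ | ⟨y, ys⟩
    · exact List.IsChain.singleton _
    · obtain ⟨hxy, h'⟩ := isChain_cons_cons.mp h
      refine isChain_cons_cons.mpr ⟨⟨hxy, by simp, by simp⟩, (ih h').imp ?_⟩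
      rintro a b ⟨h1, h2, h3⟩
      exact ⟨h1, mem_cons_of_mem _ h2, mem_cons_of_mem _ h3⟩

end SP
namespace SP
open List

/-! ### rotation blocks -/

def blk (m : ℕ) (s : List ℕ) : List (List ℕ) :=
  (List.range (m + 1)).map (fun j => (s ++ [m]).rotate j)

lemma buildStep_eq (m : ℕ) (w : List ℕ) :
    buildStep m w = glueChain (((firstAppear m w).map (blk m)).flatten) := rfl

lemma rot_rep {m j : ℕ} {s : List ℕ} (hj : j ≤ m) (hl : s.length = m) :
    (s ++ [m]).rotate j = s.drop j ++ (m :: s.take j) := by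
  have hu : (s ++ [m]).length = m + 1 := by simp [hl]
  rw [rotate_eq_drop_append_take (by omega), drop_append_of_le_length (by omega),
    take_append_of_le_length (by omega), append_assoc, singleton_append]

lemma mem_lt {m : ℕ} {s : List ℕ} (hs : s.Perm (List.range m)) {x : ℕ} (hx : x ∈ s) : x < m := by
  have := hs.mem_iff.mp hx
  simpa using this

lemma not_mem_self {m : ℕ} {s : List ℕ} (hs : s.Perm (List.range m)) : m ∉ s :=
  fun h => absurd (mem_lt hs h) (lt_irrefl m)

lemma perm_length {m : ℕ} {s : List ℕ} (hs : s.Perm (List.range m)) : s.length = m := by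
  simpa using hs.length_eq

lemma eq_append_cons_length {x : ℕ} : ∀ {u₁ u₂ v₁ v₂ : List ℕ}, x ∉ u₁ → x ∉ u₂ →
    u₁ ++ x :: v₁ = u₂ ++ x :: v₂ → u₁.length = u₂.length := by
  intro u₁
  induction u₁ with
  | nil =>
    intro u₂ v₁ v₂ _ h2 he
    cases u₂ with
    | nil => rfl
    | cons b u₂' =>
      exfalso
      simp only [nil_append, cons_append, cons.injEq] at he
      exact h2 (he.1 ▸ mem_cons_self (a := b) (l := u₂'))
  | cons a u₁' ih =>
    intro u₂ v₁ v₂ h1 h2 he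
    cases u₂ with
    | nil =>
      exfalso
      simp only [cons_append, nil_append, cons.injEq] at he
      exact h1 (he.1.symm ▸ mem_cons_self (a := a) (l := u₁'))
    | cons b u₂' =>
      simp only [cons_append, cons.injEq] at he
      simp only [length_cons]
      rw [ih (fun h => h1 (mem_cons_of_mem a h)) (fun h => h2 (mem_cons_of_mem b h)) he.2]

lemma rot_inj {m j j' : ℕ} {s t : List ℕ} (hs : s.Perm (List.range m)) (ht : t.Perm (List.range m))
    (hj : j ≤ m) (hj' : j' ≤ m)
    (heq : (s ++ [m]).rotate j = (t ++ [m]).rotate j') : j = j' ∧ s = t := by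
  have hls := perm_length hs
  have hlt := perm_length ht
  rw [rot_rep hj hls, rot_rep hj' hlt] at heq
  have hnms : m ∉ s.drop j := fun h => not_mem_self hs (mem_of_mem_drop h)
  have hnmt : m ∉ t.drop j' := fun h => not_mem_self ht (mem_of_mem_drop h)
  have hidx := eq_append_cons_length hnms hnmt heq
  simp only [length_drop, hls, hlt] at hidx
  have hjj : j = j' := by omega
  subst hjj
  have hlen : (s.drop j).length = (t.drop j).length := by simp [hls, hlt]
  obtain ⟨h1, h2⟩ := append_inj heq hlen
  have h3 : s.take j = t.take j := by simpa using h2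
  refine ⟨rfl, ?_⟩
  rw [← take_append_drop j s, ← take_append_drop j t, h1, h3]

lemma rot_perm {m j : ℕ} {s : List ℕ} (hs : s.Perm (List.range m)) :
    ((s ++ [m]).rotate j).Perm (List.range (m + 1)) := by
  refine (rotate_perm _ _).trans ?_
  rw [List.range_succ]
  exact hs.append_right [m]

lemma blk_ne (m : ℕ) (s : List ℕ) : blk m s ≠ [] := by simp [blk]

lemma blk_head? (m : ℕ) (s : List ℕ) : (blk m s).head? = some (s ++ [m]) := by
  rw [blk, range_succ_eq_map, map_cons, head?_cons, rotate_zero]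

lemma blk_getLast? {m : ℕ} {s : List ℕ} (hl : s.length = m) :
    (blk m s).getLast? = some (m :: s) := by
  rw [blk, List.range_succ, map_append, map_cons, map_nil, getLast?_concat, rot_rep le_rfl hl,
    show s.drop m = [] from by simp [hl], show s.take m = s from by simp [hl]]
  rfl

lemma blk_nodup {m : ℕ} {s : List ℕ} (hs : s.Perm (List.range m)) : (blk m s).Nodup := by
  apply Nodup.map_on _ nodup_range
  intro j hj j' hj' he
  exact (rot_inj hs hs (by simpa using Nat.lt_succ_iff.mp (mem_range.mp hj))
    (by simpa using Nat.lt_succ_iff.mp (mem_range.mp hj')) he).1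

lemma blk_disjoint {m : ℕ} {s t : List ℕ} (hs : s.Perm (List.range m))
    (ht : t.Perm (List.range m)) (hst : s ≠ t) : (blk m s).Disjoint (blk m t) := by
  intro x hxs hxt
  simp only [blk, mem_map, mem_range] at hxs hxt
  obtain ⟨j, hj, rfl⟩ := hxs
  obtain ⟨j', hj', he⟩ := hxt
  exact hst (rot_inj ht hs (by omega) (by omega) he).2.symm

lemma overlap_rot_succ {m j : ℕ} {s : List ℕ} (hs : s.Perm (List.range m)) (hj : j < m) :
    overlap ((s ++ [m]).rotate j) ((s ++ [m]).rotate (j + 1)) = m := by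
  have hl := perm_length hs
  have hu : (s ++ [m]).length = m + 1 := by simp [hl]
  have hlr : ∀ k, ((s ++ [m]).rotate k).length = m + 1 := by
    intro k; rw [length_rotate, hu]
  unfold overlap
  rw [Nat.findGreatest_eq_iff]
  refine ⟨by rw [hlr, hlr]; omega, fun _ => ?_, fun n hn hn' h => ?_⟩
  · -- take m of rotate (j+1) is a suffix of rotate j
    have hA : ((s ++ [m]).rotate (j + 1)).take m = (s.drop (j+1) ++ [m]) ++ s.take j := by
      rw [rot_rep (by omega) hl,
        show s.drop (j+1) ++ (m :: s.take (j+1)) = (s.drop (j+1) ++ [m]) ++ s.take (j+1) by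
          simp]
      set y := s.drop (j+1) ++ [m] with hy
      set z := s.take (j+1) with hz
      rw [show m = y.length + j from by simp [hy, hl]; omega, take_length_add_append, hz, take_take,
        min_eq_left (by omega)]
    have hB : ((s ++ [m]).rotate j).drop 1 = (s.drop (j+1) ++ [m]) ++ s.take j := by
      rw [rot_rep (le_of_lt hj) hl,
        drop_append_of_le_length (by simp [hl]; omega), drop_drop]
      simp
    show ((s ++ [m]).rotate (j + 1)).take m <:+ (s ++ [m]).rotate j
    rw [hA, ← hB]
    exact drop_suffix _ _
  · -- no overlap bigger than m
    rw [hlr, hlr, min_self] at hn'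
    have hn2 : n = m + 1 := by omega
    subst hn2
    rw [take_of_length_le (le_of_eq (hlr _))] at h
    have := h.eq_of_length (by rw [hlr, hlr])
    have := (rot_inj hs hs (by omega) (by omega) this).1
    omega

lemma gapok_rot_succ {m j : ℕ} {s : List ℕ} (hs : s.Perm (List.range m)) (hj : j < m) :
    GapOk (m + 1) ((s ++ [m]).rotate j) ((s ++ [m]).rotate (j + 1)) := by
  intro t ht1 ht2
  rw [overlap_rot_succ hs hj, length_rotate] at ht2
  have hl := perm_length hs
  simp [hl] at ht2
  omega

end SP
namespace SP
open List

/-! ### junction lemmas -/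

lemma junction_overlap {m : ℕ} {s t : List ℕ} (hs : s.Perm (List.range m))
    (ht : t.Perm (List.range m)) (hlt : overlap s t < m) :
    overlap (m :: s) (t ++ [m]) = overlap s t := by
  have hls := perm_length hs
  have hltl := perm_length ht
  set v := overlap s t with hv
  unfold overlap
  rw [Nat.findGreatest_eq_iff]
  refine ⟨?_, fun hv0 => ?_, fun n hn hn' => ?_⟩
  · simp only [length_cons, length_append, hls, hltl, length_cons]
    omega
  · show (t ++ [m]).take v <:+ (m :: s)
    rw [take_append_of_le_length (by omega)]
    exact (hv ▸ take_overlap_suffix s t).trans (suffix_cons m s)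
  · simp only [length_cons, length_append, length_nil, hls, hltl] at hn'
    have hn'' : n ≤ m + 1 := by omega
    intro hsuf
    rcases Nat.lt_or_ge n (m + 1) with hnm | hnm
    · have hnm' : n ≤ m := by omega
      rw [take_append_of_le_length (by omega)] at hsuf
      rcases suffix_cons_iff.mp hsuf with he | hsuf'
      · have := congrArg List.length he
        simp only [length_take, length_cons, hls, hltl] at this
        omega
      · exact not_take_suffix_of_overlap_lt (hv ▸ hn) (by omega) (by omega) hsuf'
    · have hn3 : n = m + 1 := by omega
      subst hn3
      rw [take_of_length_le (by simp [hltl])] at hsuf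
      have heq := hsuf.eq_of_length (by simp [hltl, hls])
      rcases t with _ | ⟨x, t'⟩
      · simp at hltl; omega
      · simp only [cons_append, cons.injEq] at heq
        have := mem_lt ht (mem_cons_self (a := x) (l := t'))
        omega

lemma junction_gapok {m : ℕ} {s t : List ℕ} (hs : s.Perm (List.range m))
    (ht : t.Perm (List.range m)) (hlt : overlap s t < m) :
    GapOk (m + 1) (m :: s) (t ++ [m]) := by
  intro t' ht1 ht2
  have hls := perm_length hs
  have hltl := perm_length ht
  rw [junction_overlap hs ht hlt] at ht2 ⊢
  rw [length_cons, hls] at ht2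
  set v := overlap s t with hv
  have hvt : v ≤ t.length := hv ▸ overlap_le_right s t
  have hreg : (m :: s) ++ (t ++ [m]).drop v = m :: ((s ++ t.drop v) ++ [m]) := by
    rw [drop_append_of_le_length (by omega)]
    simp
  rw [hreg]
  obtain ⟨t'', rfl⟩ : ∃ t'', t' = t'' + 1 := ⟨t' - 1, by omega⟩
  have hmid : (s ++ t.drop v).length = 2 * m - v := by
    simp [hls, hltl]; omega
  have hwin : ((m :: ((s ++ t.drop v) ++ [m])).drop (t'' + 1)).take (m + 1)
      = ((s ++ t.drop v).drop t'').take (m + 1) := by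
    rw [drop_succ_cons, drop_append_of_le_length (by omega),
      take_append_of_le_length (by simp only [length_drop]; omega)]
  rw [hwin]
  intro hp
  have hm : m ∈ ((s ++ t.drop v).drop t'').take (m + 1) := hp.mem_iff.mpr (by simp)
  have := mem_of_mem_drop (mem_of_mem_take hm)
  rcases mem_append.mp this with h | h
  · exact absurd (mem_lt hs h) (lt_irrefl m)
  · exact absurd (mem_lt ht (mem_of_mem_drop h)) (lt_irrefl m)

/-! ### block reversal -/

lemma rot_rev {m j : ℕ} {s : List ℕ} (hj : j ≤ m) (hl : s.length = m) :
    ((s ++ [m]).rotate (m - j)).reverse = (s.reverse ++ [m]).rotate j := by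
  rw [rot_rep (by omega) hl, rot_rep hj (by simp [hl]), reverse_append,
    show (m :: s.take (m - j)).reverse = (s.take (m - j)).reverse ++ [m] from by simp,
    reverse_take, reverse_drop, hl, show m - (m - j) = j from by omega]
  simp

lemma blk_rev {m : ℕ} {s : List ℕ} (hl : s.length = m) :
    ((blk m s).map List.reverse).reverse = blk m s.reverse := by
  apply List.ext_getElem (by simp [blk])
  intro j h1 h2
  have hj : j < m + 1 := by simpa [blk] using h2
  rw [getElem_reverse]
  simp only [blk, getElem_map, getElem_range, length_map, length_range, Nat.add_sub_cancel]
  exact rot_rev (by omega) hl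

/-! ### completeness -/

lemma mem_blk_of_perm {m : ℕ} {u : List ℕ} (hu : u.Perm (List.range (m + 1))) :
    ∃ s, s.Perm (List.range m) ∧ u ∈ blk m s := by
  have hul : u.length = m + 1 := by simpa using hu.length_eq
  have hmu : m ∈ u := hu.mem_iff.mpr (by simp)
  obtain ⟨i, hi, hui⟩ := getElem_of_mem hmu
  have hvl : (u.rotate (i + 1)).length = m + 1 := by simp [hul]
  have hvm : (u.rotate (i + 1))[m]'(by omega) = m := by
    rw [getElem_rotate]
    have hidx : (m + (i + 1)) % u.length = i := by
      rw [hul, show m + (i + 1) = (m + 1) + i from by omega, Nat.add_mod_left]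
      exact Nat.mod_eq_of_lt (by omega)
    simp only [hidx]
    exact hui
  have hsv : u.rotate (i + 1) = (u.rotate (i + 1)).take m ++ [m] := by
    conv_lhs => rw [← take_append_drop m (u.rotate (i + 1))]
    congr 1
    rw [drop_eq_getElem_cons (by omega), drop_eq_nil_of_le (by omega), hvm]
  have hsp : ((u.rotate (i + 1)).take m).Perm (List.range m) := by
    have h2 : ((u.rotate (i + 1)).take m ++ [m]).Perm (List.range m ++ [m]) := by
      rw [← hsv, ← List.range_succ]
      exact (rotate_perm u (i + 1)).trans hu
    have h3 := ((perm_append_singleton m _).symm.trans h2).trans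
      (perm_append_singleton m (List.range m))
    exact h3.cons_inv
  refine ⟨(u.rotate (i + 1)).take m, hsp, ?_⟩
  have hurot : u = ((u.rotate (i + 1)).take m ++ [m]).rotate (m - i) := by
    rw [← hsv, rotate_rotate, show i + 1 + (m - i) = m + 1 from by omega, ← hul,
      rotate_length]
  rw [blk]
  exact mem_map.mpr ⟨m - i, mem_range.mpr (by omega), hurot.symm⟩

/-! ### chains and sums for blocks -/

lemma blk_chain {m : ℕ} {s : List ℕ} (hs : s.Perm (List.range m)) (hm : 1 ≤ m) :
    (blk m s).Chain' (Rel (m + 1)) := by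
  change List.IsChain _ _
  rw [blk, isChain_map]
  apply (isChain_range_succ _ m).mpr
  intro j hj
  refine ⟨?_, ?_, gapok_rot_succ hs hj⟩
  · rw [overlap_rot_succ hs hj]; omega
  · rw [overlap_rot_succ hs hj]; omega

lemma blk_overlap_chain {m : ℕ} {s : List ℕ} (hs : s.Perm (List.range m)) :
    (blk m s).Chain' (fun a b => overlap a b = m) := by
  change List.IsChain _ _
  rw [blk, isChain_map]
  apply (isChain_range_succ _ m).mpr
  intro j hj
  exact overlap_rot_succ hs hj

lemma ovSum_const {c : ℕ} : ∀ {l : List (List ℕ)}, l.Chain' (fun a b => overlap a b = c) →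
    ovSum l = (l.length - 1) * c := by
  intro l
  induction l with
  | nil => intro _; simp [ovSum]
  | cons a r ih =>
    cases r with
    | nil => intro _; simp [ovSum]
    | cons b r' =>
      intro h
      obtain ⟨h1, h2⟩ := isChain_cons_cons.mp h
      rw [ovSum_cons, ih h2, h1]
      simp only [length_cons, Nat.add_sub_cancel]
      ring

lemma ovSum_blk {m : ℕ} {s : List ℕ} (hs : s.Perm (List.range m)) :
    ovSum (blk m s) = m * m := by
  rw [ovSum_const (blk_overlap_chain hs)]
  simp [blk]

end SP
namespace SP
open List

/-! ### the invariant -/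

structure Inv (m : ℕ) (w : List ℕ) (S : List (List ℕ)) : Prop where
  hm : 1 ≤ m
  ne : S ≠ []
  perm : ∀ s ∈ S, s.Perm (List.range m)
  nodup : S.Nodup
  complete : ∀ s, s.Perm (List.range m) → s ∈ S
  chain : S.Chain' (Rel m)
  hw : w = glueChain S

lemma Inv.firstAppear_eq_S {m : ℕ} {w : List ℕ} {S : List (List ℕ)} (h : Inv m w S) :
    firstAppear m w = S := by
  rw [h.hw]
  exact firstAppear_glue h.hm h.ne h.perm h.chain h.nodup

lemma flatten_blk_ne {m : ℕ} {S : List (List ℕ)} (hne : S ≠ []) :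
    ((S.map (blk m)).flatten) ≠ [] := by
  obtain ⟨s, S', rfl⟩ := exists_cons_of_ne_nil hne
  rw [map_cons, flatten_cons]
  intro h
  exact blk_ne m s (append_eq_nil_iff.mp h).1

lemma flatten_blk_perm {m : ℕ} {S : List (List ℕ)}
    (hperm : ∀ s ∈ S, s.Perm (List.range m)) :
    ∀ c ∈ (S.map (blk m)).flatten, c.Perm (List.range (m + 1)) := by
  intro c hc
  obtain ⟨l, hl, hcl⟩ := mem_flatten.mp hc
  obtain ⟨s, hsS, rfl⟩ := mem_map.mp hl
  obtain ⟨j, _, rfl⟩ := mem_map.mp hcl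
  exact rot_perm (hperm s hsS)

lemma flatten_blk_nodup {m : ℕ} {S : List (List ℕ)}
    (hperm : ∀ s ∈ S, s.Perm (List.range m)) (hnodup : S.Nodup) :
    ((S.map (blk m)).flatten).Nodup := by
  rw [nodup_flatten]
  constructor
  · intro l hl
    obtain ⟨s, hsS, rfl⟩ := mem_map.mp hl
    exact blk_nodup (hperm s hsS)
  · rw [pairwise_map]
    exact hnodup.imp_of_mem (fun {a b} ha hb hab => blk_disjoint (hperm a ha) (hperm b hb) hab)

lemma flatten_blk_chain {m : ℕ} {S : List (List ℕ)} (hm : 1 ≤ m)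
    (hperm : ∀ s ∈ S, s.Perm (List.range m)) (hchain : S.Chain' (Rel m)) :
    ((S.map (blk m)).flatten).Chain' (Rel (m + 1)) := by
  change List.IsChain _ _
  rw [isChain_flatten (by
    intro h
    obtain ⟨s, _, hs⟩ := mem_map.mp h
    exact blk_ne m s hs)]
  refine ⟨?_, ?_⟩
  · intro l hl
    obtain ⟨s, hsS, rfl⟩ := mem_map.mp hl
    exact blk_chain (hperm s hsS) hm
  · rw [isChain_map]
    refine (chain'_mem hchain).imp ?_
    rintro a b ⟨⟨h1, h2, h3⟩, hamem, hbmem⟩ x hx y hy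
    rw [blk_getLast? (perm_length (hperm a hamem))] at hx
    rw [blk_head?] at hy
    obtain rfl : m :: a = x := by simpa using hx
    obtain rfl : b ++ [m] = y := by simpa using hy
    have hpa := hperm a hamem
    have hpb := hperm b hbmem
    refine ⟨?_, ?_, junction_gapok hpa hpb h2⟩
    · rw [junction_overlap hpa hpb h2]; omega
    · rw [junction_overlap hpa hpb h2]; omega

lemma ovSum_flatten_blk {m : ℕ} : ∀ {S : List (List ℕ)}, S ≠ [] →
    (∀ s ∈ S, s.Perm (List.range m)) → S.Chain' (Rel m) →
    ovSum ((S.map (blk m)).flatten) = S.length * (m * m) + ovSum S := by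
  intro S
  induction S with
  | nil => intro h; exact absurd rfl h
  | cons s r ih =>
    intro _ hperm hchain
    cases r with
    | nil =>
      rw [map_cons, map_nil, flatten_cons, flatten_nil, append_nil,
        ovSum_blk (hperm s mem_cons_self)]
      simp [ovSum]
    | cons t r' =>
      obtain ⟨hrel, hchain'⟩ := isChain_cons_cons.mp hchain
      have hps := hperm s mem_cons_self
      have hpt := hperm t (by simp)
      rw [map_cons, flatten_cons]
      have hne2 : (((t :: r').map (blk m)).flatten) ≠ [] := flatten_blk_ne (by simp)
      rw [ovSum_append (blk m s) _ (blk_ne m s) hne2]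
      have hgl : (blk m s).getLast (blk_ne m s) = m :: s := by
        have h0 := blk_getLast? (perm_length hps)
        rwa [getLast?_eq_getLast (blk_ne m s), Option.some.injEq] at h0
      have hhd : ((((t :: r').map (blk m)).flatten)).head hne2 = t ++ [m] := by
        obtain ⟨tl, htl⟩ := head?_eq_some_iff.mp (blk_head? m t)
        have hq : ((((t :: r').map (blk m)).flatten)).head? = some (t ++ [m]) := by
          rw [map_cons, flatten_cons, htl, cons_append, head?_cons]
        rwa [head?_eq_head hne2, Option.some.injEq] at hq
      rw [hgl, hhd, ih (by simp) (fun x hx => hperm x (mem_cons_of_mem _ hx)) hchain',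
        ovSum_blk hps, junction_overlap hps hpt hrel.2.1, ovSum_cons]
      simp only [length_cons]
      ring

lemma glue_length_S {m : ℕ} {S : List (List ℕ)}
    (hperm : ∀ s ∈ S, s.Perm (List.range m)) :
    (glueChain S).length + ovSum S = S.length * m := by
  rw [glue_length S, map_congr_left (fun s hs => perm_length (hperm s hs)), map_const',
    sum_replicate, smul_eq_mul]

lemma glue_length_blk {m : ℕ} {S : List (List ℕ)}
    (hperm : ∀ s ∈ S, s.Perm (List.range m)) :
    (glueChain ((S.map (blk m)).flatten)).length + ovSum ((S.map (blk m)).flatten)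
      = S.length * ((m + 1) * (m + 1)) := by
  rw [glue_length, map_flatten, sum_flatten, map_map, map_map]
  have hpt : ∀ s ∈ S, ((List.sum ∘ List.map List.length) ∘ blk m) s = (m + 1) * (m + 1) := by
    intro s hs
    have hl := perm_length (hperm s hs)
    simp only [Function.comp_apply, blk, map_map]
    have h1 : ((List.range (m+1)).map (List.length ∘ fun j => (s ++ [m]).rotate j))
        = (List.range (m+1)).map (fun _ => m + 1) := by
      apply map_congr_left
      intro j _
      simp [hl]
    rw [h1, map_const', sum_replicate, smul_eq_mul, length_range]
  rw [map_congr_left hpt, map_const', sum_replicate, smul_eq_mul]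

/-! ### the induction step -/

lemma step {m : ℕ} {w : List ℕ} {S : List (List ℕ)} (h : Inv m w S)
    (hpal : w.reverse = w) :
    Inv (m + 1) (buildStep m w) ((S.map (blk m)).flatten) ∧
      (buildStep m w).reverse = buildStep m w ∧
      (buildStep m w).length = w.length + S.length * (m + 1) := by
  have hfa : firstAppear m w = S := h.firstAppear_eq_S
  have hbs : buildStep m w = glueChain ((S.map (blk m)).flatten) := by
    rw [buildStep_eq, hfa]
  have hInv' : Inv (m + 1) (buildStep m w) ((S.map (blk m)).flatten) :=
    { hm := by omega
      ne := flatten_blk_ne h.ne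
      perm := flatten_blk_perm h.perm
      nodup := flatten_blk_nodup h.perm h.nodup
      complete := fun u hu => by
        obtain ⟨s, hsp, hub⟩ := mem_blk_of_perm hu
        exact mem_flatten.mpr ⟨blk m s, mem_map_of_mem (h.complete s hsp), hub⟩
      chain := flatten_blk_chain h.hm h.perm h.chain
      hw := hbs }
  have hS' : ((S.map List.reverse).reverse) = S := by
    have h1 : winF m w = S := by
      rw [h.hw]; exact winF_glue m h.hm S h.ne h.perm h.chain
    have hrev_perm : ∀ s ∈ (S.map List.reverse).reverse, s.Perm (List.range m) := by
      intro s hs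
      simp only [mem_reverse, mem_map] at hs
      obtain ⟨a, ha, rfl⟩ := hs
      exact (reverse_perm a).trans (h.perm a ha)
    have hrev_chain : ((S.map List.reverse).reverse).Chain' (Rel m) := by
      change List.IsChain _ _
      rw [isChain_reverse, isChain_map]
      refine (chain'_mem h.chain).imp ?_
      rintro a b ⟨hr, ha, hb⟩
      exact Rel_reverse (perm_length (h.perm a ha)) (perm_length (h.perm b hb)) hr
    have h2 : winF m w = (S.map List.reverse).reverse := by
      conv_lhs => rw [← hpal]
      rw [h.hw, glue_reverse]
      exact winF_glue m h.hm _ (by simp [h.ne]) hrev_perm hrev_chain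
    rw [← h2, h1]
  have hpal' : (buildStep m w).reverse = buildStep m w := by
    rw [hbs, glue_reverse, ← hbs]
    have hchains : ((((S.map (blk m)).flatten).map List.reverse).reverse)
        = (S.map (blk m)).flatten := by
      calc (((S.map (blk m)).flatten).map List.reverse).reverse
          = ((S.map (fun s => ((blk m s).map List.reverse))).flatten).reverse := by
            rw [map_flatten, map_map]; rfl
        _ = (((S.map (fun s => ((blk m s).map List.reverse))).map List.reverse).reverse).flatten := by
            rw [reverse_flatten]
        _ = (((S.map (fun s => ((blk m s).map List.reverse).reverse))).reverse).flatten := by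
            rw [map_map]; rfl
        _ = (((S.map (fun s => blk m s.reverse))).reverse).flatten := by
            rw [map_congr_left (fun s hs => blk_rev (perm_length (h.perm s hs)))]
        _ = (((S.map List.reverse).map (blk m)).reverse).flatten := by rw [map_map]; rfl
        _ = (((S.map List.reverse).reverse).map (blk m)).flatten := by
            rw [map_reverse]
        _ = (S.map (blk m)).flatten := by rw [hS']
    rw [hchains, ← hbs]
  have hlen : (buildStep m w).length = w.length + S.length * (m + 1) := by
    have e1 := glue_length_S h.perm
    have e2 := glue_length_blk (m := m) h.perm
    have e3 := ovSum_flatten_blk h.ne h.perm h.chain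
    have hsq : S.length * ((m + 1) * (m + 1))
        = S.length * (m * m) + S.length * m + S.length * (m + 1) := by ring
    rw [hbs, h.hw]
    linarith [e1, e2, e3, hsq]
  exact ⟨hInv', hpal', hlen⟩

end SP
namespace SP
open List

lemma perm_words_card {m : ℕ} {S : List (List ℕ)} (hperm : ∀ s ∈ S, s.Perm (List.range m))
    (hnodup : S.Nodup) (hcomplete : ∀ s, s.Perm (List.range m) → s ∈ S) :
    S.length = Nat.factorial m := by
  have hp : S.Perm (List.range m).permutations := by
    rw [perm_ext_iff_of_nodup hnodup (nodup_permutations _ nodup_range)]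
    intro a
    rw [mem_permutations]
    exact ⟨fun h => hperm a h, fun h => hcomplete a h⟩
  rw [hp.length_eq, length_permutations, length_range]

lemma base : Inv 1 (superword 1) [[0]] := by
  refine ⟨le_rfl, by simp, ?_, by simp, ?_, ?_, ?_⟩
  · intro s hs
    rw [mem_singleton] at hs
    subst hs
    rw [show List.range 1 = [0] from rfl]
  · intro s hsp
    rw [show List.range 1 = [0] from rfl, perm_singleton] at hsp
    simp [hsp]
  · exact isChain_singleton _
  · rfl

lemma main_aux : ∀ k : ℕ, ∃ S, Inv (k + 1) (superword (k + 1)) S ∧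
    (superword (k + 1)).reverse = superword (k + 1) ∧
    (superword (k + 1)).length = ∑ i ∈ Finset.Icc 1 (k + 1), Nat.factorial i := by
  intro k
  induction k with
  | zero =>
    refine ⟨[[0]], base, by rfl, ?_⟩
    simp [superword, Nat.factorial]
  | succ n ih =>
    obtain ⟨S, hInv, hpal, hlen⟩ := ih
    obtain ⟨hInv', hpal', hlen'⟩ := step hInv hpal
    have hsw : superword (n + 2) = buildStep (n + 1) (superword (n + 1)) := rfl
    refine ⟨_, hsw ▸ hInv', hsw ▸ hpal', ?_⟩
    rw [hsw, hlen', hlen, perm_words_card hInv.perm hInv.nodup hInv.complete,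
      Finset.sum_Icc_succ_top (by omega : 1 ≤ n + 2)]
    have : Nat.factorial (n + 2) = Nat.factorial (n + 1) * (n + 2) := by
      rw [Nat.factorial_succ]; ring
    rw [this]

end SP

theorem stmt_19 (n : ℕ) (hn : 1 ≤ n) :
    IsSuperpermNat n (superword n) ∧
    (superword n).length = ∑ i ∈ Finset.Icc 1 n, Nat.factorial i ∧
    (superword n).reverse = superword n := by
  obtain ⟨k, rfl⟩ : ∃ k, n = k + 1 := ⟨n - 1, by omega⟩
  obtain ⟨S, hInv, hpal, hlen⟩ := SP.main_aux k
  refine ⟨?_, hlen, hpal⟩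
  intro σ
  have hperm : (List.ofFn (fun i => (σ i : ℕ))).Perm (List.range (k + 1)) := by
    rw [List.perm_ext_iff_of_nodup ?_ List.nodup_range]
    · intro a
      simp only [List.mem_ofFn, Set.mem_range, List.mem_range]
      constructor
      · rintro ⟨i, rfl⟩
        exact (σ i).isLt
      · intro ha
        exact ⟨σ⁻¹ ⟨a, ha⟩, by simp⟩
    · rw [List.nodup_ofFn]
      intro i j hij
      exact σ.injective (Fin.val_injective hij)
  have hmem := hInv.complete _ hperm
  rw [hInv.hw]
  exact SP.infix_glue hmem
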